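/- Let L/K be a finite separable totally ramified extension of local fields of degree n, let v: L* → ℤ/nℤ be the map x ↦ (v_L(x) mod n), and for a sub-K-vector space V of L set s(V) = {v(x) : x ∈ V, x ≠ 0} ⊆ ℤ/nℤ. Then for every sub-K-vector space V of L, the cardinality of s(V) equals dim_K(V). -/

import Mathlib

/-- A local field structure on a field `K`: a normalized (surjective) discrete
valuation `v : K* ↠ ℤ`, extended by a junk value at `0`, with respect to which
`K` is complete. -/
structure LocalFieldStruct (K : Type) [Field K] where
  /-- the valuation; its value at `0` is irrelevant -/
  v : K → ℤ
  v_mul : ∀ x y : K, x ≠ 0 → y ≠ 0 → v (x * y) = v x + v y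
  v_add : ∀ x y : K, x ≠ 0 → y ≠ 0 → x + y ≠ 0 → min (v x) (v y) ≤ v (x + y)
  v_surj : ∀ n : ℤ, ∃ x : K, x ≠ 0 ∧ v x = n
  complete : ∀ a : ℕ → K,
      (∀ N : ℤ, ∃ M : ℕ, ∀ m : ℕ, M ≤ m → ∀ n : ℕ, M ≤ n →
        a m = a n ∨ N ≤ v (a m - a n)) →
      ∃ x : K, ∀ N : ℤ, ∃ M : ℕ, ∀ n : ℕ, M ≤ n → a n = x ∨ N ≤ v (a n - x)

namespace LocalFieldStruct

variable {K L : Type} [Field K] [Field L]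

/-- `x` lies in the valuation ring `O_K`. -/
def Integral (w : LocalFieldStruct K) (x : K) : Prop :=
  x = 0 ∨ 0 ≤ w.v x

/-- The residue characteristic of `K` is the prime `p`, i.e. `p` maps to `0`
in the residue field of the valuation ring. -/
def ResidueCharP (w : LocalFieldStruct K) (p : ℕ) : Prop :=
  p.Prime ∧ ((p : K) = 0 ∨ 0 < w.v (p : K))

/-- `K` has mixed characteristic `(0, p)`: `K` has characteristic `0` and its
residue field has characteristic `p > 0`. -/
def MixedChar (w : LocalFieldStruct K) (p : ℕ) : Prop :=
  CharZero K ∧ p.Prime ∧ 0 < w.v (p : K)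

/-- `e` is the ramification index `e_{L/K}`: the valuation of `L` restricted to
`K` is `e` times the valuation of `K`. -/
def IsRamificationIndex (wK : LocalFieldStruct K) (wL : LocalFieldStruct L)
    [Algebra K L] (e : ℕ) : Prop :=
  0 < e ∧ ∀ x : K, x ≠ 0 → wL.v (algebraMap K L x) = (e : ℤ) * wK.v x

/-- `d` is the valuation `d_{L/K}` of the different of `L/K`, characterized by
`Tr_{L/K}(𝔭_L^i) ⊆ O_K ↔ i ≥ -d` for all `i : ℤ`. -/
def IsDifferentVal (wK : LocalFieldStruct K) (wL : LocalFieldStruct L)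
    [Algebra K L] (d : ℤ) : Prop :=
  ∀ i : ℤ,
    (∀ x : L, (x ≠ 0 → i ≤ wL.v x) → wK.Integral (Algebra.trace K L x)) ↔ -d ≤ i

end LocalFieldStruct

/-- `x` is a normal basis generator of `L` over `K`: the Galois conjugates of
`x` form a `K`-basis of `L`. -/
def IsNormalElement (K : Type) [Field K] {L : Type} [Field L] [Algebra K L]
    (x : L) : Prop :=
  LinearIndependent K (fun σ : L ≃ₐ[K] L => σ x) ∧
    Submodule.span K (Set.range fun σ : L ≃ₐ[K] L => σ x) = ⊤

/-- The valuation criterion `VC(L/K)`, for an extension with ramification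
index `e` and different of valuation `d`: every nonzero `x ∈ L` with
`v_L(x) ≡ -d-1 (mod e)` is a normal basis generator of `L` over `K`. -/
def VC (K : Type) [Field K] {L : Type} [Field L] [Algebra K L]
    (wL : LocalFieldStruct L) (e : ℕ) (d : ℤ) : Prop :=
  ∀ x : L, x ≠ 0 → Int.ModEq (e : ℤ) (wL.v x) (-d - 1) → IsNormalElement K x

namespace LocalFieldStruct

variable {K : Type} [Field K] (w : LocalFieldStruct K)

lemma v_one' : w.v 1 = 0 := by
  have := w.v_mul 1 1 one_ne_zero one_ne_zero
  simpa using this.symm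

lemma v_neg' (x : K) (hx : x ≠ 0) : w.v (-x) = w.v x := by
  have h1 : w.v (-1 : K) = 0 := by
    have := w.v_mul (-1) (-1) (by norm_num) (by norm_num)
    simp only [neg_mul, one_mul, neg_neg, w.v_one'] at this
    omega
  calc w.v (-x) = w.v ((-1) * x) := by ring_nf
    _ = w.v (-1) + w.v x := w.v_mul _ _ (by norm_num) hx
    _ = w.v x := by rw [h1]; ring

lemma v_inv' (x : K) (hx : x ≠ 0) : w.v x⁻¹ = - w.v x := by
  have := w.v_mul x x⁻¹ hx (inv_ne_zero hx)
  rw [mul_inv_cancel₀ hx, w.v_one'] at this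
  omega

/-- Fact A: strict domination. -/
lemma v_add_eq_left (x y : K) (hx : x ≠ 0) (hy : y ≠ 0) (h : w.v x < w.v y) :
    x + y ≠ 0 ∧ w.v (x + y) = w.v x := by
  have hxy : x + y ≠ 0 := by
    intro h0
    have : y = -x := by linear_combination h0
    rw [this, w.v_neg' x hx] at h; omega
  refine ⟨hxy, ?_⟩
  have h1 : w.v x ≤ w.v (x + y) := by
    have := w.v_add x y hx hy hxy; omega
  have h2 : w.v (x + y) ≤ w.v x := by
    have hx' : x = (x + y) + (-y) := by ring
    have := w.v_add (x + y) (-y) hxy (neg_ne_zero.mpr hy) (by rw [← hx']; exact hx)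
    rw [← hx', w.v_neg' y hy] at this
    omega
  omega

lemma v_add_eq_min (x y : K) (hx : x ≠ 0) (hy : y ≠ 0) (h : w.v x ≠ w.v y) :
    x + y ≠ 0 ∧ w.v (x + y) = min (w.v x) (w.v y) := by
  rcases lt_or_gt_of_ne h with h' | h'
  · have := w.v_add_eq_left x y hx hy h'
    exact ⟨this.1, by omega⟩
  · have := w.v_add_eq_left y x hy hx h'
    rw [add_comm] at this
    exact ⟨this.1, by omega⟩

/-- Fact B: a finite sum of nonzero elements with pairwise distinct valuations. -/
lemma sum_ne_zero (s : Finset ι) (f : ι → K) (hne : s.Nonempty)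
    (h0 : ∀ i ∈ s, f i ≠ 0)
    (hd : ∀ i ∈ s, ∀ j ∈ s, w.v (f i) = w.v (f j) → i = j) :
    (∑ i ∈ s, f i) ≠ 0 ∧ ∃ i ∈ s, w.v (∑ i ∈ s, f i) = w.v (f i) := by
  classical
  induction s using Finset.cons_induction with
  | empty => simp at hne
  | cons a t ha ih =>
    rw [Finset.sum_cons]
    rcases t.eq_empty_or_nonempty with rfl | htne
    · simp only [Finset.sum_empty, add_zero]
      exact ⟨h0 a (by simp), a, by simp⟩
    · obtain ⟨hts, i, hit, hiv⟩ := ih htne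
        (fun i hi => h0 i (Finset.mem_cons_of_mem hi))
        (fun i hi j hj hij => hd i (Finset.mem_cons_of_mem hi) j (Finset.mem_cons_of_mem hj) hij)
      have hfa : f a ≠ 0 := h0 a (Finset.mem_cons_self a t)
      have hvne : w.v (f a) ≠ w.v (∑ i ∈ t, f i) := by
        rw [hiv]
        intro hh
        exact ha (hd a (Finset.mem_cons_self a t) i (Finset.mem_cons_of_mem hit) hh ▸ hit)
      obtain ⟨hs, hv⟩ := w.v_add_eq_min (f a) (∑ i ∈ t, f i) hfa hts hvne
      refine ⟨hs, ?_⟩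
      rcases min_cases (w.v (f a)) (w.v (∑ i ∈ t, f i)) with ⟨h1, _⟩ | ⟨h1, _⟩
      · exact ⟨a, Finset.mem_cons_self a t, by omega⟩
      · exact ⟨i, Finset.mem_cons_of_mem hit, by omega⟩

lemma v_pow (x : K) (hx : x ≠ 0) (i : ℕ) : w.v (x ^ i) = i * w.v x := by
  induction i with
  | zero => simpa using w.v_one'
  | succ k ih =>
    rw [pow_succ, w.v_mul _ _ (pow_ne_zero k hx) hx, ih]
    push_cast; ring

end LocalFieldStruct

namespace LocalFieldStruct

open Classical in
/-- The norm `x ↦ 2^(-e * v x)` associated to a valuation. -/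
noncomputable def agnorm {K : Type} [Field K] (w : LocalFieldStruct K) (e : ℕ) :
    AddGroupNorm K where
  toFun x := if x = 0 then 0 else (2 : ℝ) ^ (-((e : ℤ) * w.v x))
  map_zero' := by simp
  add_le' := by
    classical
    intro x y
    by_cases hx : x = 0
    · simp [hx]
    by_cases hy : y = 0
    · simp [hy]
    by_cases hxy : x + y = 0
    · simp only [hxy, if_pos rfl, if_neg hx, if_neg hy]
      positivity
    simp only [if_neg hx, if_neg hy, if_neg hxy]
    have hmin := w.v_add x y hx hy hxy
    have h2 : (1:ℝ) ≤ 2 := one_le_two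
    have key : (2:ℝ) ^ (-((e:ℤ) * w.v (x+y))) ≤
        max ((2:ℝ) ^ (-((e:ℤ) * w.v x))) ((2:ℝ) ^ (-((e:ℤ) * w.v y))) := by
      rcases le_total (w.v x) (w.v y) with h | h
      · refine le_max_of_le_left (zpow_le_zpow_right₀ h2 ?_)
        have : w.v x ≤ w.v (x + y) := by omega
        nlinarith [Int.natCast_nonneg e]
      · refine le_max_of_le_right (zpow_le_zpow_right₀ h2 ?_)
        have : w.v y ≤ w.v (x + y) := by omega
        nlinarith [Int.natCast_nonneg e]
    have p1 : (0:ℝ) < 2 ^ (-((e:ℤ) * w.v x)) := zpow_pos (by norm_num) _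
    have p2 : (0:ℝ) < 2 ^ (-((e:ℤ) * w.v y)) := zpow_pos (by norm_num) _
    have : max ((2:ℝ) ^ (-((e:ℤ) * w.v x))) ((2:ℝ) ^ (-((e:ℤ) * w.v y))) ≤
        (2:ℝ) ^ (-((e:ℤ) * w.v x)) + (2:ℝ) ^ (-((e:ℤ) * w.v y)) := by
      apply max_le <;> linarith
    linarith
  neg' := by
    classical
    intro x
    by_cases hx : x = 0
    · simp [hx]
    · simp [hx, neg_eq_zero, w.v_neg' x hx]
  eq_zero_of_map_eq_zero' := by
    classical
    intro x hx
    by_contra h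
    simp only [if_neg h] at hx
    exact absurd hx (ne_of_gt (zpow_pos (by norm_num) _))

lemma agnorm_apply {K : Type} [Field K] (w : LocalFieldStruct K) (e : ℕ) (x : K) (hx : x ≠ 0) :
    w.agnorm e x = (2 : ℝ) ^ (-((e : ℤ) * w.v x)) := by
  classical
  have h : w.agnorm e x = if x = 0 then 0 else (2 : ℝ) ^ (-((e : ℤ) * w.v x)) := rfl
  rw [h, if_neg hx]

end LocalFieldStruct

namespace LocalFieldStruct

variable {K L : Type} [Field K] [Field L] [Algebra K L]

lemma v_algebraMap_mul (wK : LocalFieldStruct K) (wL : LocalFieldStruct L) {n : ℕ}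
    (htot : IsRamificationIndex wK wL n) (c : K) (hc : c ≠ 0) (x : L) (hx : x ≠ 0) :
    wL.v (algebraMap K L c * x) = (n : ℤ) * wK.v c + wL.v x := by
  have hc' : algebraMap K L c ≠ 0 := (map_ne_zero (algebraMap K L)).mpr hc
  rw [wL.v_mul _ _ hc' hx, htot.2 c hc]

lemma class_algebraMap_mul (wK : LocalFieldStruct K) (wL : LocalFieldStruct L) {n : ℕ}
    (htot : IsRamificationIndex wK wL n) (c : K) (hc : c ≠ 0) (x : L) (hx : x ≠ 0) :
    ((wL.v (algebraMap K L c * x) : ℤ) : ZMod n) = ((wL.v x : ℤ) : ZMod n) := by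
  rw [v_algebraMap_mul wK wL htot c hc x hx]
  push_cast
  simp [ZMod.natCast_self]

/-- Elements with pairwise distinct valuation classes mod `n` are `K`-linearly
independent. -/
lemma linearIndependent_of_distinct_classes (wK : LocalFieldStruct K)
    (wL : LocalFieldStruct L) {n : ℕ} (htot : IsRamificationIndex wK wL n)
    {ι : Type} [Fintype ι] (f : ι → L) (h0 : ∀ i, f i ≠ 0)
    (hd : Function.Injective fun i => ((wL.v (f i) : ℤ) : ZMod n)) :
    LinearIndependent K f := by
  classical
  rw [Fintype.linearIndependent_iff]
  intro g hg
  by_contra hne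
  push_neg at hne
  set t : Finset ι := Finset.univ.filter (fun i => g i ≠ 0) with ht
  have htne : t.Nonempty := by
    obtain ⟨i, hi⟩ := hne
    exact ⟨i, by simp [ht, hi]⟩
  have hsum : (∑ i ∈ t, g i • f i) = 0 := by
    rw [← hg]
    refine (Finset.sum_subset (Finset.subset_univ t) ?_)
    intro i _ hit
    have : g i = 0 := by by_contra h; exact hit (by simp [ht, h])
    simp [this]
  have h0' : ∀ i ∈ t, g i • f i ≠ 0 := by
    intro i hit
    have hgi : g i ≠ 0 := by simp [ht] at hit; exact hit
    exact smul_ne_zero hgi (h0 i)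
  have hcl : ∀ i ∈ t, ((wL.v (g i • f i) : ℤ) : ZMod n) = ((wL.v (f i) : ℤ) : ZMod n) := by
    intro i hit
    have hgi : g i ≠ 0 := by simp [ht] at hit; exact hit
    rw [Algebra.smul_def]
    exact class_algebraMap_mul wK wL htot _ hgi _ (h0 i)
  have := wL.sum_ne_zero t (fun i => g i • f i) htne h0' ?_
  · exact this.1 hsum
  · intro i hi j hj hij
    apply hd
    show ((wL.v (f i) : ℤ) : ZMod n) = ((wL.v (f j) : ℤ) : ZMod n)
    rw [← hcl i hi, ← hcl j hj]
    rw [hij]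

end LocalFieldStruct

namespace LocalFieldStruct

variable {K L : Type} [Field K] [Field L] [Algebra K L]

set_option maxHeartbeats 1000000 in
/-- The residue field of a totally ramified extension is that of the base:
any unit can be approximated by a constant to strictly bigger valuation. -/
lemma exists_const_approx [FiniteDimensional K L] (wK : LocalFieldStruct K)
    (wL : LocalFieldStruct L) {n : ℕ} (hn : n = Module.finrank K L)
    (htot : IsRamificationIndex wK wL n) (u : L) (hu : u ≠ 0) (hvu : wL.v u = 0) :
    ∃ c : K, u = algebraMap K L c ∨
      (u - algebraMap K L c ≠ 0 ∧ 0 < wL.v (u - algebraMap K L c)) := by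
  classical
  by_contra H
  push_neg at H
  -- H : ∀ c, u ≠ algebraMap c ∧ (u - algebraMap c ≠ 0 → ¬ 0 < v (u - c))?
  have H1 : ∀ c : K, u - algebraMap K L c ≠ 0 := by
    intro c h
    exact (H c).1 (by linear_combination h)
  have H2 : ∀ c : K, wL.v (u - algebraMap K L c) ≤ 0 := by
    intro c
    have := (H c).2 (H1 c)
    omega
  have hn0 : 0 < n := htot.1
  -- block fact
  have block : ∀ a b : K, ¬(a = 0 ∧ b = 0) →
      algebraMap K L a + algebraMap K L b * u ≠ 0 ∧
      ((wL.v (algebraMap K L a + algebraMap K L b * u) : ℤ) : ZMod n) = 0 := by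
    intro a b hab
    by_cases hb : b = 0
    · have ha : a ≠ 0 := by tauto
      have ha' : algebraMap K L a ≠ 0 := (map_ne_zero _).mpr ha
      subst hb
      simp only [map_zero, zero_mul, add_zero]
      refine ⟨ha', ?_⟩
      rw [htot.2 a ha]
      push_cast
      simp
    · -- b ≠ 0
      set c := a / b with hc
      have hb' : algebraMap K L b ≠ 0 := (map_ne_zero _).mpr hb
      have hfac : algebraMap K L a + algebraMap K L b * u
          = algebraMap K L b * (u + algebraMap K L c) := by
        rw [hc, map_div₀]
        field_simp
        ring
      have key : u + algebraMap K L c ≠ 0 ∧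
          ((wL.v (u + algebraMap K L c) : ℤ) : ZMod n) = 0 := by
        have hne : u + algebraMap K L c ≠ 0 := by
          have := H1 (-c)
          rwa [map_neg, sub_neg_eq_add] at this
        refine ⟨hne, ?_⟩
        by_cases hc0 : c = 0
        · simp [hc0, hvu]
        · have hc' : algebraMap K L c ≠ 0 := (map_ne_zero _).mpr hc0
          have hvc : wL.v (algebraMap K L c) = (n : ℤ) * wK.v c := htot.2 c hc0
          rcases lt_trichotomy (wK.v c) 0 with h | h | h
          · -- v c < 0 : dominating term is c
            have hlt : wL.v (algebraMap K L c) < wL.v u := by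
              rw [hvu, hvc]; nlinarith
            have := (wL.v_add_eq_left _ _ hc' hu hlt).2
            rw [add_comm] at this
            rw [this, hvc]
            push_cast
            simp
          · -- v c = 0
            have hge : 0 ≤ wL.v (u + algebraMap K L c) := by
              have := wL.v_add u (algebraMap K L c) hu hc' hne
              rw [hvu, hvc, h, mul_zero] at this
              omega
            have hle : wL.v (u + algebraMap K L c) ≤ 0 := by
              have := H2 (-c)
              rwa [map_neg, sub_neg_eq_add] at this
            have h0 : wL.v (u + algebraMap K L c) = 0 := le_antisymm hle hge
            rw [h0]
            simp
          · -- v c > 0 : dominating term is u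
            have hlt : wL.v u < wL.v (algebraMap K L c) := by
              rw [hvu, hvc]; nlinarith
            rw [(wL.v_add_eq_left _ _ hu hc' hlt).2, hvu]
            simp
      refine ⟨by rw [hfac]; exact mul_ne_zero hb' key.1, ?_⟩
      rw [hfac, class_algebraMap_mul wK wL htot b hb _ key.1, key.2]
  -- a uniformizer
  obtain ⟨π, hπ0, hπ1⟩ := wL.v_surj 1
  -- the 2n elements
  set z : (Fin n ⊕ Fin n) → L :=
    Sum.elim (fun i => π ^ (i : ℕ)) (fun i => π ^ (i : ℕ) * u) with hz
  have hindep : LinearIndependent K z := by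
    rw [Fintype.linearIndependent_iff]
    intro g hg
    set F : Fin n → L := fun i =>
      π ^ (i : ℕ) * (algebraMap K L (g (Sum.inl i)) + algebraMap K L (g (Sum.inr i)) * u)
      with hF
    have hsum : ∑ i : Fin n, F i = 0 := by
      rw [← hg, Fintype.sum_sum_type]
      rw [← Finset.sum_add_distrib]
      apply Finset.sum_congr rfl
      intro i _
      simp only [hz, Sum.elim_inl, Sum.elim_inr, hF, Algebra.smul_def]
      ring
    have hzero : ∀ i : Fin n, g (Sum.inl i) = 0 ∧ g (Sum.inr i) = 0 := by
      by_contra hcon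
      push_neg at hcon
      obtain ⟨i0, hi0⟩ := hcon
      set t : Finset (Fin n) :=
        Finset.univ.filter (fun i => ¬(g (Sum.inl i) = 0 ∧ g (Sum.inr i) = 0)) with ht
      have hi0t : i0 ∈ t := by simp [ht]; tauto
      have hFprop : ∀ i ∈ t, F i ≠ 0 ∧ ((wL.v (F i) : ℤ) : ZMod n) = ((i : ℕ) : ZMod n) := by
        intro i hit
        have hab : ¬(g (Sum.inl i) = 0 ∧ g (Sum.inr i) = 0) := by
          simp [ht] at hit; tauto
        obtain ⟨hB0, hBc⟩ := block _ _ hab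
        have hπi : π ^ (i : ℕ) ≠ 0 := pow_ne_zero _ hπ0
        constructor
        · exact mul_ne_zero hπi hB0
        · rw [wL.v_mul _ _ hπi hB0, wL.v_pow π hπ0 (i : ℕ), hπ1]
          push_cast
          push_cast at hBc
          rw [hBc]
          ring
      have hts : ∑ i ∈ t, F i = 0 := by
        rw [← hsum]
        refine Finset.sum_subset (Finset.subset_univ t) ?_
        intro i _ hit
        have : g (Sum.inl i) = 0 ∧ g (Sum.inr i) = 0 := by
          by_contra h; exact hit (by simp [ht]; tauto)
        simp [hF, this.1, this.2]
      have := wL.sum_ne_zero t F ⟨i0, hi0t⟩ (fun i hi => (hFprop i hi).1) ?_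
      · exact this.1 hts
      · intro i hi j hj hij
        have h1 := (hFprop i hi).2
        have h2 := (hFprop j hj).2
        rw [hij, h2] at h1
        -- (i : ZMod n) = (j : ZMod n) with i j : Fin n
        have : ((j : ℕ) : ZMod n) = ((i : ℕ) : ZMod n) := h1
        haveI hnz : NeZero n := ⟨by omega⟩
        have hval := congrArg ZMod.val this
        rw [ZMod.val_cast_of_lt j.isLt, ZMod.val_cast_of_lt i.isLt] at hval
        exact Fin.ext (by omega)
    have : ∀ σ : Fin n ⊕ Fin n, g σ = 0 := by
      intro σ
      rcases σ with i | i
      · exact (hzero i).1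
      · exact (hzero i).2
    exact this
  have hcard := hindep.fintype_card_le_finrank
  rw [← hn] at hcard
  simp only [Fintype.card_sum, Fintype.card_fin] at hcard
  omega

/-- Fact D : given two elements of equal valuation, one can subtract a constant
multiple of the second from the first to strictly increase the valuation. -/
lemma exists_sub_smul [FiniteDimensional K L] (wK : LocalFieldStruct K)
    (wL : LocalFieldStruct L) {n : ℕ} (hn : n = Module.finrank K L)
    (htot : IsRamificationIndex wK wL n) (x y : L) (hx : x ≠ 0) (hy : y ≠ 0)
    (hv : wL.v x = wL.v y) :
    ∃ c : K, x - algebraMap K L c * y = 0 ∨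
      (x - algebraMap K L c * y ≠ 0 ∧ wL.v x < wL.v (x - algebraMap K L c * y)) := by
  have hu : x / y ≠ 0 := div_ne_zero hx hy
  have hvu : wL.v (x / y) = 0 := by
    rw [div_eq_mul_inv, wL.v_mul x y⁻¹ hx (inv_ne_zero hy), wL.v_inv' y hy]
    omega
  obtain ⟨c, hc⟩ := exists_const_approx wK wL hn htot (x / y) hu hvu
  refine ⟨c, ?_⟩
  have hxy : x - algebraMap K L c * y = (x / y - algebraMap K L c) * y := by
    field_simp
  rcases hc with hc | ⟨hne, hpos⟩
  · left
    rw [hxy, ← hc]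
    simp
  · right
    constructor
    · rw [hxy]; exact mul_ne_zero hne hy
    · rw [hxy, wL.v_mul _ _ hne hy]
      omega

end LocalFieldStruct


open LocalFieldStruct in
/-- **Lemma (NiceLemma).** Let `L/K` be a finite separable totally ramified
extension of local fields of degree `n`.  For every sub-`K`-vector space `V`
of `L`, the set `s(V) = {v_L(x) mod n : x ∈ V, x ≠ 0} ⊆ ℤ/nℤ` has cardinality
`dim_K V`. -/
theorem statement3 {K L : Type} [Field K] [Field L] [Algebra K L]
    [FiniteDimensional K L] [Algebra.IsSeparable K L]
    (wK : LocalFieldStruct K) (wL : LocalFieldStruct L)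
    (n : ℕ) (hn : n = Module.finrank K L)
    (htot : IsRamificationIndex wK wL n)
    (V : Submodule K L) :
    Set.ncard {a : ZMod n | ∃ x ∈ V, x ≠ 0 ∧ ((wL.v x : ℤ) : ZMod n) = a} =
      Module.finrank K V := by
  classical
  have hn0 : 0 < n := htot.1
  haveI : NeZero n := ⟨by omega⟩
  -- Normed field structure on K
  letI nK : NormedAddCommGroup K := AddGroupNorm.toNormedAddCommGroup (wK.agnorm n)
  letI nfK : NormedField K :=
    { dist_eq := fun _ _ => rfl
      norm_mul := by
        intro a b
        by_cases ha : a = 0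
        · simp [ha]
        by_cases hb : b = 0
        · simp [hb]
        have hK : ∀ x : K, x ≠ 0 → ‖x‖ = (2:ℝ) ^ (-((n:ℤ) * wK.v x)) := fun x hx =>
          wK.agnorm_apply n x hx
        rw [hK a ha, hK b hb, hK _ (mul_ne_zero ha hb), wK.v_mul a b ha hb,
          ← zpow_add₀ (by norm_num : (2:ℝ) ≠ 0)]
        ring_nf }
  letI ntfK : NontriviallyNormedField K :=
    { nfK with
      non_trivial := by
        obtain ⟨x, hx0, hx1⟩ := wK.v_surj (-1)
        refine ⟨x, ?_⟩
        have : ‖x‖ = (2:ℝ) ^ (-((n:ℤ) * wK.v x)) := wK.agnorm_apply n x hx0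
        rw [this, hx1]
        simp only [mul_neg_one, neg_neg]
        have : (1:ℝ) = (2:ℝ) ^ (0:ℤ) := by norm_num
        rw [this]
        apply zpow_lt_zpow_right₀ one_lt_two
        omega }
  have hKnorm : ∀ x : K, x ≠ 0 → ‖x‖ = (2:ℝ) ^ (-((n:ℤ) * wK.v x)) := fun x hx =>
    wK.agnorm_apply n x hx
  haveI : CompleteSpace K := by
    apply Metric.complete_of_cauchySeq_tendsto
    intro u hu
    have hyp : ∀ N : ℤ, ∃ M : ℕ, ∀ m : ℕ, M ≤ m → ∀ k : ℕ, M ≤ k →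
        u m = u k ∨ N ≤ wK.v (u m - u k) := by
      intro N
      obtain ⟨M, hM⟩ := Metric.cauchySeq_iff.mp hu ((2:ℝ) ^ (-((n:ℤ) * N)))
        (zpow_pos (by norm_num) _)
      refine ⟨M, fun m hm k hk => ?_⟩
      by_cases heq : u m = u k
      · exact Or.inl heq
      · right
        have hne : u m - u k ≠ 0 := sub_ne_zero_of_ne heq
        have := hM m hm k hk
        rw [dist_eq_norm, hKnorm _ hne] at this
        have hlt := (zpow_lt_zpow_iff_right₀ (by norm_num : (1:ℝ) < 2)).mp this
        have : (n:ℤ) * N < (n:ℤ) * wK.v (u m - u k) := by omega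
        have hnn : (0:ℤ) < n := by exact_mod_cast hn0
        nlinarith [this]
    obtain ⟨x, hx⟩ := wK.complete u hyp
    refine ⟨x, ?_⟩
    rw [Metric.tendsto_atTop]
    intro ε hε
    obtain ⟨m0, hm0⟩ := exists_pow_lt_of_lt_one hε (by norm_num : (1:ℝ)/2 < 1)
    obtain ⟨M, hM⟩ := hx (m0 : ℤ)
    refine ⟨M, fun k hk => ?_⟩
    by_cases heq : u k = x
    · simpa [heq] using hε
    · rcases hM k hk with h' | hv
      · exact absurd h' heq
      have hne : u k - x ≠ 0 := sub_ne_zero_of_ne heq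
      rw [dist_eq_norm, hKnorm _ hne]
      calc (2:ℝ) ^ (-((n:ℤ) * wK.v (u k - x))) ≤ (2:ℝ) ^ (-(m0:ℤ)) := by
            apply zpow_le_zpow_right₀ one_le_two
            have hnn : (1:ℤ) ≤ n := by exact_mod_cast hn0
            nlinarith
        _ = ((1:ℝ)/2) ^ m0 := by
            rw [one_div, inv_pow, ← zpow_natCast, ← zpow_neg]
        _ < ε := hm0
  -- Normed group structure on L, compatible with the K-action
  letI nL : NormedAddCommGroup L := AddGroupNorm.toNormedAddCommGroup (wL.agnorm 1)
  have hLnorm : ∀ x : L, x ≠ 0 → ‖x‖ = (2:ℝ) ^ (-(wL.v x)) := by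
    intro x hx
    have := wL.agnorm_apply 1 x hx
    show wL.agnorm 1 x = _
    simpa using this
  letI nsL : NormedSpace K L := by
    refine ⟨fun c x => ?_⟩
    by_cases hc : c = 0
    · simp [hc]
    by_cases hx : x = 0
    · simp [hx]
    have hcx : c • x = algebraMap K L c * x := Algebra.smul_def c x
    have hne' : algebraMap K L c * x ≠ 0 :=
      mul_ne_zero ((map_ne_zero _).mpr hc) hx
    rw [hcx, hLnorm _ hne', hLnorm x hx, hKnorm c hc,
      v_algebraMap_mul wK wL htot c hc x hx,
      ← zpow_add₀ (by norm_num : (2:ℝ) ≠ 0)]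
    apply le_of_eq
    ring_nf
  -- the set of classes
  set S : Set (ZMod n) := {a : ZMod n | ∃ x ∈ V, x ≠ 0 ∧ ((wL.v x : ℤ) : ZMod n) = a}
    with hS
  haveI hSfin : Fintype ↥S := Set.Finite.fintype (Set.toFinite S)
  have hrep : ∀ a : ↥S, ∃ x : L, x ∈ V ∧ x ≠ 0 ∧ ((wL.v x : ℤ) : ZMod n) = (a : ZMod n) := by
    rintro ⟨a, ha⟩
    obtain ⟨x, hxV, hx0, hxa⟩ := ha
    exact ⟨x, hxV, hx0, hxa⟩
  set xf : ↥S → L := fun a => (hrep a).choose with hxf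
  have hxfV : ∀ a, xf a ∈ V := fun a => (hrep a).choose_spec.1
  have hxf0 : ∀ a, xf a ≠ 0 := fun a => (hrep a).choose_spec.2.1
  have hxfc : ∀ a, ((wL.v (xf a) : ℤ) : ZMod n) = (a : ZMod n) :=
    fun a => (hrep a).choose_spec.2.2
  have hncard : S.ncard = Fintype.card ↥S := by
    rw [← Nat.card_coe_set_eq, Nat.card_eq_fintype_card]
  -- Part 1 : ncard S ≤ finrank V
  have hindep : LinearIndependent K xf := by
    apply linearIndependent_of_distinct_classes wK wL htot xf hxf0
    intro a b hab
    simp only at hab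
    rw [hxfc a, hxfc b] at hab
    exact Subtype.ext hab
  have part1 : S.ncard ≤ Module.finrank K V := by
    set xV : ↥S → ↥V := fun a => ⟨xf a, hxfV a⟩ with hxV
    have hcomp : V.subtype ∘ xV = xf := rfl
    have hindepV : LinearIndependent K xV :=
      LinearIndependent.of_comp V.subtype (by rw [hcomp]; exact hindep)
    have := hindepV.fintype_card_le_finrank
    omega
  -- Part 2 : finrank V ≤ ncard S
  set W : Submodule K L := Submodule.span K (Set.range xf) with hW
  have hxfW : ∀ a, xf a ∈ W := fun a => Submodule.subset_span (Set.mem_range_self a)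
  have descent : ∀ z : L, z ∈ V → z ∉ W →
      ∃ z' : L, z' ∈ V ∧ z' ∉ W ∧ z - z' ∈ W ∧ wL.v z < wL.v z' := by
    intro z hzV hzW
    have hz0 : z ≠ 0 := fun h => hzW (h ▸ W.zero_mem)
    have haS : ((wL.v z : ℤ) : ZMod n) ∈ S := ⟨z, hzV, hz0, rfl⟩
    set a : ↥S := ⟨_, haS⟩ with ha
    have hcl : ((wL.v (xf a) : ℤ) : ZMod n) = ((wL.v z : ℤ) : ZMod n) := hxfc a
    have hdvd : (n : ℤ) ∣ wL.v z - wL.v (xf a) := by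
      have hmod := (ZMod.intCast_eq_intCast_iff _ _ _).mp hcl
      exact Int.ModEq.dvd hmod
    obtain ⟨k, hk⟩ := hdvd
    obtain ⟨c, hc0, hck⟩ := wK.v_surj k
    have hcx0 : algebraMap K L c * xf a ≠ 0 :=
      mul_ne_zero ((map_ne_zero _).mpr hc0) (hxf0 a)
    have hveq : wL.v z = wL.v (algebraMap K L c * xf a) := by
      rw [v_algebraMap_mul wK wL htot c hc0 _ (hxf0 a), hck]
      omega
    obtain ⟨c', hc'⟩ := exists_sub_smul wK wL hn htot z
      (algebraMap K L c * xf a) hz0 hcx0 hveq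
    set q : L := algebraMap K L c' * (algebraMap K L c * xf a) with hq
    have hmemW : q ∈ W := by
      rw [hq, ← mul_assoc, ← map_mul, ← Algebra.smul_def]
      exact W.smul_mem _ (hxfW a)
    have hmemV : q ∈ V := by
      rw [hq, ← mul_assoc, ← map_mul, ← Algebra.smul_def]
      exact V.smul_mem _ (hxfV a)
    rcases hc' with h0 | ⟨hne, hlt⟩
    · exfalso
      apply hzW
      have : z = q := by rw [hq]; linear_combination h0
      rw [this]; exact hmemW
    · refine ⟨z - q, V.sub_mem hzV hmemV, ?_, ?_, hlt⟩
      · intro hmem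
        apply hzW
        have : z = (z - q) + q := by ring
        rw [this]; exact W.add_mem hmem hmemW
      · have : z - (z - q) = q := by ring
        rw [this]; exact hmemW
  have hyW : ∀ y ∈ V, y ∈ W := by
    intro y hyV
    by_contra hyWn
    have hstep : ∀ z : {z : L // z ∈ V ∧ z ∉ W},
        ∃ z' : {z : L // z ∈ V ∧ z ∉ W}, z.1 - z'.1 ∈ W ∧ wL.v z.1 < wL.v z'.1 := by
      intro z
      obtain ⟨z', h1, h2, h3, h4⟩ := descent z.1 z.2.1 z.2.2
      exact ⟨⟨z', h1, h2⟩, h3, h4⟩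
    choose g hg1 hg2 using hstep
    set seq : ℕ → {z : L // z ∈ V ∧ z ∉ W} := fun k => g^[k] ⟨y, hyV, hyWn⟩ with hseq
    have hseq_succ : ∀ k, seq (k+1) = g (seq k) := fun k =>
      Function.iterate_succ_apply' g k _
    have hWmem : ∀ k, y - (seq k).1 ∈ W := by
      intro k
      induction k with
      | zero =>
        have : y - (seq 0).1 = 0 := by simp [hseq]
        rw [this]; exact W.zero_mem
      | succ k ih =>
        have heq : y - (seq (k+1)).1 = (y - (seq k).1) + ((seq k).1 - (g (seq k)).1) := by
          rw [hseq_succ]; ring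
        rw [heq]
        exact W.add_mem ih (hg1 _)
    have hv_ge : ∀ k : ℕ, wL.v y + k ≤ wL.v (seq k).1 := by
      intro k
      induction k with
      | zero => simp [hseq]
      | succ k ih =>
        have := hg2 (seq k)
        rw [← hseq_succ] at this
        push_cast
        omega
    have hT0 : ∀ k, (seq k).1 ≠ 0 := fun k h => (seq k).2.2 (h ▸ W.zero_mem)
    have hnorm_le : ∀ k : ℕ, ‖(seq k).1‖ ≤ (2:ℝ) ^ (-wL.v y) * ((1:ℝ)/2) ^ k := by
      intro k
      rw [hLnorm _ (hT0 k)]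
      have h1 : (2:ℝ) ^ (-wL.v (seq k).1) ≤ (2:ℝ) ^ (-(wL.v y + (k:ℤ))) := by
        apply zpow_le_zpow_right₀ one_le_two
        have := hv_ge k
        omega
      calc (2:ℝ) ^ (-wL.v (seq k).1) ≤ (2:ℝ) ^ (-(wL.v y + (k:ℤ))) := h1
        _ = (2:ℝ) ^ (-wL.v y) * ((1:ℝ)/2) ^ k := by
          rw [neg_add, zpow_add₀ (by norm_num : (2:ℝ) ≠ 0), one_div, inv_pow,
            ← zpow_natCast, ← zpow_neg]
    have htend0 : Filter.Tendsto (fun k => (seq k).1) Filter.atTop (nhds 0) := by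
      apply squeeze_zero_norm hnorm_le
      have : Filter.Tendsto (fun k : ℕ => ((1:ℝ)/2) ^ k) Filter.atTop (nhds 0) :=
        tendsto_pow_atTop_nhds_zero_of_lt_one (by norm_num) (by norm_num)
      have := this.const_mul ((2:ℝ) ^ (-wL.v y))
      simpa using this
    have htend : Filter.Tendsto (fun k => y - (seq k).1) Filter.atTop (nhds y) := by
      have := Filter.Tendsto.sub (tendsto_const_nhds (x := y) (f := Filter.atTop)) htend0
      simpa using this
    have hclosed : IsClosed (W : Set L) := Submodule.closed_of_finiteDimensional W
    exact hyWn (hclosed.mem_of_tendsto htend (Filter.Eventually.of_forall hWmem))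
  have hVW : V ≤ W := hyW
  haveI : Fintype ↥(Set.range xf) := Set.fintypeRange xf
  have h2 : Module.finrank K ↥W ≤ (Set.range xf).toFinset.card :=
    finrank_span_le_card _
  have h3 : (Set.range xf).toFinset.card ≤ Fintype.card ↥S := by
    rw [Set.toFinset_card]
    exact Fintype.card_range_le xf
  have h4 : Module.finrank K ↥V ≤ Module.finrank K ↥W := Submodule.finrank_mono hVW
  omega
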